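/- Let f, g ∈ ℂ[x₁,…,xₙ] be homogeneous of degree d ≥ 3, and suppose there is an isomorphism of graded ℂ-algebras φ: ℂ[x₁,…,xₙ]/J_g → ℂ[x₁,…,xₙ]/J_f between their Milnor algebras. Then φ is induced by a degree-preserving ℂ-algebra automorphism u* of ℂ[x₁,…,xₙ] (i.e., a linear change of variables) satisfying u*(J_g) = J_f. -/

import Mathlib

open MvPolynomial

noncomputable def jacobianIdeal {n : ℕ} (f : MvPolynomial (Fin n) ℂ) :
    Ideal (MvPolynomial (Fin n) ℂ) :=
  Ideal.span (Set.range fun i => pderiv i f)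

lemma degree_single_one {n : ℕ} (i : Fin n) : (Finsupp.single i 1 : Fin n →₀ ℕ).degree = 1 := by
  simp [Finsupp.degree_apply, Finsupp.support_single_ne_zero]

lemma degree_eq_one_iff {n : ℕ} {m : Fin n →₀ ℕ} (hm : m.degree = 1) :
    ∃ i, m = Finsupp.single i 1 := by
  have hne : m.support.Nonempty := by
    rw [Finset.nonempty_iff_ne_empty]
    intro h
    have : m = 0 := by rwa [← Finsupp.support_eq_empty]
    simp [this, map_zero] at hm
  obtain ⟨i, hi⟩ := hne
  have hmi : m i = 1 := by
    have h1 : m i ≤ 1 := hm ▸ Finsupp.le_degree i m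
    have h2 : 1 ≤ m i := Nat.one_le_iff_ne_zero.mpr (Finsupp.mem_support_iff.mp hi)
    omega
  refine ⟨i, ?_⟩
  have hsum : ∑ j ∈ m.support, m j = 1 := hm
  have : ∑ j ∈ m.support.erase i, m j = 0 := by
    rw [← Finset.add_sum_erase _ _ hi, hmi] at hsum
    omega
  have hz : ∀ j ∈ m.support.erase i, m j = 0 := by
    intro j hj
    exact (Finset.sum_eq_zero_iff.mp this) j hj
  have hsupp : m.support = {i} := by
    apply Finset.eq_singleton_iff_unique_mem.mpr
    refine ⟨hi, fun j hj => ?_⟩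
    by_contra hne
    exact (Finsupp.mem_support_iff.mp hj) (hz j (Finset.mem_erase.mpr ⟨hne, hj⟩))
  obtain ⟨-, h⟩ := Finsupp.support_eq_singleton.mp hsupp
  rw [h, hmi]

lemma pderiv_isHomogeneous {n d : ℕ} {f : MvPolynomial (Fin n) ℂ} (hf : f.IsHomogeneous d)
    (i : Fin n) : (pderiv i f).IsHomogeneous (d - 1) := by
  conv_lhs => rw [f.as_sum]
  rw [map_sum]
  apply IsHomogeneous.sum
  intro s hs
  rw [pderiv_monomial]
  by_cases h : s i = 0
  · simp only [h, Nat.cast_zero, mul_zero, map_zero]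
    exact isHomogeneous_zero _ _ _
  · apply isHomogeneous_monomial
    have hsd : s.degree = d := by
      rw [Finsupp.degree_eq_weight_one]
      exact hf (Finsupp.mem_support_iff.mp hs)
    have hle : Finsupp.single i 1 ≤ s := by
      rw [Finsupp.single_le_iff]
      omega
    have heq : (s - Finsupp.single i 1) + Finsupp.single i 1 = s := tsub_add_cancel_of_le hle
    have : (s - Finsupp.single i 1).degree + (Finsupp.single i 1).degree = s.degree := by
      rw [Finsupp.degree_eq_weight_one, ← map_add, heq]
    rw [degree_single_one] at this
    omega

lemma homog_one_jac {n d : ℕ} (hd : 3 ≤ d) {f p : MvPolynomial (Fin n) ℂ}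
    (hf : f.IsHomogeneous d) (hp : p ∈ jacobianIdeal f) (h1 : p.IsHomogeneous 1) : p = 0 := by
  obtain ⟨c, hc⟩ := (Ideal.mem_span_range_iff_exists_fun).mp hp
  ext m
  rw [coeff_zero]
  by_cases hm : m.degree = 1
  · rw [← hc]
    rw [coeff_sum]
    apply Finset.sum_eq_zero
    intro i _
    rw [coeff_mul]
    apply Finset.sum_eq_zero
    rintro ⟨u, v⟩ huv
    have huv' : u + v = m := Finset.HasAntidiagonal.mem_antidiagonal.mp huv
    have hv : v.degree ≤ 1 := by
      have : u.degree + v.degree = m.degree := by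
        rw [Finsupp.degree_eq_weight_one, ← map_add, huv']
      omega
    have : coeff v (pderiv i f) = 0 := by
      apply (pderiv_isHomogeneous hf i).coeff_eq_zero
      omega
    rw [this, mul_zero]
  · exact h1.coeff_eq_zero hm

section LinForms

variable {n : ℕ}

noncomputable def linForm (a : Fin n → ℂ) : MvPolynomial (Fin n) ℂ :=
  ∑ i, a i • X i

lemma linForm_isHomogeneous (a : Fin n → ℂ) : (linForm a).IsHomogeneous 1 := by
  apply IsHomogeneous.sum
  intro i _
  exact (homogeneousSubmodule (Fin n) ℂ 1).smul_mem _ (isHomogeneous_X _ i)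

lemma coeff_linForm (a : Fin n → ℂ) (i : Fin n) :
    coeff (Finsupp.single i 1) (linForm a) = a i := by
  rw [linForm, coeff_sum]
  rw [Finset.sum_eq_single i]
  · simp [coeff_X']
  · intro j _ hj
    simp only [coeff_smul, coeff_X', smul_eq_mul]
    rw [if_neg, mul_zero]
    intro h
    exact hj (by simpa using (Finsupp.single_left_injective one_ne_zero) h)
  · simp

lemma linForm_add (a b : Fin n → ℂ) : linForm (a + b) = linForm a + linForm b := by
  simp [linForm, add_smul, Finset.sum_add_distrib]

lemma linForm_smul (c : ℂ) (a : Fin n → ℂ) : linForm (c • a) = c • linForm a := by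
  simp [linForm, Finset.smul_sum, smul_smul]

lemma eq_linForm_of_homog_one {p : MvPolynomial (Fin n) ℂ} (hp : p.IsHomogeneous 1) :
    p = linForm (fun i => coeff (Finsupp.single i 1) p) := by
  ext m
  by_cases hm : m.degree = 1
  · obtain ⟨i, rfl⟩ := degree_eq_one_iff hm
    rw [coeff_linForm]
  · rw [hp.coeff_eq_zero hm, ((linForm_isHomogeneous _).coeff_eq_zero hm)]

lemma linForm_single (j : Fin n) : linForm (fun i => if i = j then (1:ℂ) else 0) = X j := by
  rw [linForm]
  rw [Finset.sum_eq_single j]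
  · simp
  · intro i _ hij; simp [hij]
  · simp

lemma linForm_inj {a b : Fin n → ℂ} (h : linForm a = linForm b) : a = b := by
  funext i
  rw [← coeff_linForm a i, ← coeff_linForm b i, h]

end LinForms

theorem graded_iso_induced_by_linear {n d : ℕ} (hd : 3 ≤ d)
    (f g : MvPolynomial (Fin n) ℂ) (hf : f.IsHomogeneous d) (hg : g.IsHomogeneous d)
    (φ : (MvPolynomial (Fin n) ℂ ⧸ jacobianIdeal g) ≃ₐ[ℂ]
         (MvPolynomial (Fin n) ℂ ⧸ jacobianIdeal f))
    (hφ : ∀ (k : ℕ) (p : MvPolynomial (Fin n) ℂ), p.IsHomogeneous k →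
      ∃ q : MvPolynomial (Fin n) ℂ, q.IsHomogeneous k ∧
        φ (Ideal.Quotient.mk (jacobianIdeal g) p) = Ideal.Quotient.mk (jacobianIdeal f) q) :
    ∃ U : MvPolynomial (Fin n) ℂ ≃ₐ[ℂ] MvPolynomial (Fin n) ℂ,
      (∀ i, (U (X i)).IsHomogeneous 1) ∧
      Ideal.map (U : MvPolynomial (Fin n) ℂ →ₐ[ℂ] MvPolynomial (Fin n) ℂ)
        (jacobianIdeal g) = jacobianIdeal f ∧
      ∀ p : MvPolynomial (Fin n) ℂ,
        φ (Ideal.Quotient.mk (jacobianIdeal g) p) =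
          Ideal.Quotient.mk (jacobianIdeal f) (U p) := by
  classical
  have mk_smul : ∀ (I : Ideal (MvPolynomial (Fin n) ℂ)) (c : ℂ) (x : MvPolynomial (Fin n) ℂ),
      Ideal.Quotient.mk I (c • x) = c • Ideal.Quotient.mk I x := by
    intro I c x
    have h := map_smul (Ideal.Quotient.mkₐ ℂ I) c x
    rwa [Ideal.Quotient.mkₐ_eq_mk] at h
  -- choose homogeneous images of X i
  choose qX hqX1 hqX2 using fun i => hφ 1 (X i) (isHomogeneous_X _ i)
  -- the linear map on coefficient vectors induced by φ
  have key : ∀ a : Fin n → ℂ, ∃ b : Fin n → ℂ,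
      φ (Ideal.Quotient.mk (jacobianIdeal g) (linForm a)) = Ideal.Quotient.mk (jacobianIdeal f) (linForm b) := by
    intro a
    obtain ⟨q, hq1, hq2⟩ := hφ 1 (linForm a) (linForm_isHomogeneous a)
    exact ⟨fun i => coeff (Finsupp.single i 1) q, by rwa [← eq_linForm_of_homog_one hq1]⟩
  choose F0 hF0 using key
  have uniq : ∀ a b : Fin n → ℂ,
      φ (Ideal.Quotient.mk (jacobianIdeal g) (linForm a)) = Ideal.Quotient.mk (jacobianIdeal f) (linForm b) → b = F0 a := by
    intro a b h
    have : Ideal.Quotient.mk (jacobianIdeal f) (linForm b) = Ideal.Quotient.mk (jacobianIdeal f) (linForm (F0 a)) := by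
      rw [← h, hF0]
    have hmem : linForm b - linForm (F0 a) ∈ (jacobianIdeal f) := Ideal.Quotient.eq.mp this
    have hz : linForm b - linForm (F0 a) = 0 :=
      homog_one_jac hd hf hmem ((linForm_isHomogeneous b).sub (linForm_isHomogeneous (F0 a)))
    exact linForm_inj (sub_eq_zero.mp hz)
  -- F0 is linear and injective
  have F0_add : ∀ a b, F0 (a + b) = F0 a + F0 b := by
    intro a b
    symm
    apply uniq
    rw [linForm_add a b, linForm_add (F0 a) (F0 b), map_add, map_add, map_add, hF0 a, hF0 b]
  have F0_smul : ∀ (c : ℂ) a, F0 (c • a) = c • F0 a := by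
    intro c a
    symm
    apply uniq
    rw [linForm_smul c a, linForm_smul c (F0 a), mk_smul, mk_smul, map_smul, hF0 a]
  set F : (Fin n → ℂ) →ₗ[ℂ] (Fin n → ℂ) :=
    { toFun := F0, map_add' := F0_add, map_smul' := F0_smul }
  have F_inj : Function.Injective F := by
    rw [injective_iff_map_eq_zero]
    intro a ha
    have h0 : φ (Ideal.Quotient.mk (jacobianIdeal g) (linForm a)) = 0 := by
      have : F0 a = 0 := ha
      rw [hF0 a, this]
      have : linForm (0 : Fin n → ℂ) = 0 := by simp [linForm]
      rw [this, map_zero]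
    have h1 : Ideal.Quotient.mk (jacobianIdeal g) (linForm a) = 0 := by
      have := φ.injective (h0.trans (map_zero φ).symm)
      exact this
    have hmem : linForm a ∈ (jacobianIdeal g) := Ideal.Quotient.eq_zero_iff_mem.mp h1
    have : linForm a = 0 := homog_one_jac hd hg hmem (linForm_isHomogeneous a)
    have h2 : linForm a = linForm 0 := by simpa [linForm] using this
    exact linForm_inj h2
  have F_surj : Function.Surjective F := LinearMap.injective_iff_surjective.mp F_inj
  -- preimages of X j
  have key2 : ∀ j : Fin n, ∃ q' : MvPolynomial (Fin n) ℂ, q'.IsHomogeneous 1 ∧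
      φ (Ideal.Quotient.mk (jacobianIdeal g) q') = Ideal.Quotient.mk (jacobianIdeal f) (X j) := by
    intro j
    obtain ⟨a, ha⟩ := F_surj (fun i => if i = j then (1:ℂ) else 0)
    refine ⟨linForm a, linForm_isHomogeneous a, ?_⟩
    rw [hF0 a]
    have : F0 a = fun i => if i = j then (1:ℂ) else 0 := ha
    rw [this, linForm_single]
  choose qI hqI1 hqI2 using key2
  -- the two algebra homs
  set T : MvPolynomial (Fin n) ℂ →ₐ[ℂ] MvPolynomial (Fin n) ℂ := aeval qX
  set V : MvPolynomial (Fin n) ℂ →ₐ[ℂ] MvPolynomial (Fin n) ℂ := aeval qI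
  have hT : ∀ p, φ (Ideal.Quotient.mk (jacobianIdeal g) p) = Ideal.Quotient.mk (jacobianIdeal f) (T p) := by
    intro p
    have h := MvPolynomial.algHom_ext (f := (φ.toAlgHom.comp (Ideal.Quotient.mkₐ ℂ (jacobianIdeal g))))
      (g := ((Ideal.Quotient.mkₐ ℂ (jacobianIdeal f)).comp T)) (fun i => by
        simp only [AlgHom.coe_comp, Function.comp_apply, Ideal.Quotient.mkₐ_eq_mk,
          AlgEquiv.toAlgHom_eq_coe, AlgHom.coe_coe]
        rw [show T (X i) = qX i from aeval_X qX i]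
        exact hqX2 i)
    have := congrArg (fun ψ => ψ p) h
    simpa using this
  have hV : ∀ p, φ (Ideal.Quotient.mk (jacobianIdeal g) (V p)) = Ideal.Quotient.mk (jacobianIdeal f) p := by
    intro p
    have h := MvPolynomial.algHom_ext
      (f := (φ.toAlgHom.comp ((Ideal.Quotient.mkₐ ℂ (jacobianIdeal g)).comp V)))
      (g := (Ideal.Quotient.mkₐ ℂ (jacobianIdeal f))) (fun i => by
        simp only [AlgHom.coe_comp, Function.comp_apply, Ideal.Quotient.mkₐ_eq_mk,
          AlgEquiv.toAlgHom_eq_coe, AlgHom.coe_coe]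
        rw [show V (X i) = qI i from aeval_X qI i]
        exact hqI2 i)
    have := congrArg (fun ψ => ψ p) h
    simpa using this
  -- T and V are mutually inverse
  have hVT : V.comp T = AlgHom.id ℂ _ := by
    apply MvPolynomial.algHom_ext
    intro i
    simp only [AlgHom.coe_comp, Function.comp_apply, AlgHom.id_apply]
    have hw : (V (T (X i))).IsHomogeneous 1 := by
      have : T (X i) = qX i := aeval_X qX i
      rw [this]
      exact (hqX1 i).aeval qI (fun j => hqI1 j)
    have hmkeq : Ideal.Quotient.mk (jacobianIdeal g) (V (T (X i))) = Ideal.Quotient.mk (jacobianIdeal g) (X i) := by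
      apply φ.injective
      rw [hV (T (X i)), ← hT (X i)]
    have hmem : V (T (X i)) - X i ∈ (jacobianIdeal g) := Ideal.Quotient.eq.mp hmkeq
    have := homog_one_jac hd hg hmem (hw.sub (isHomogeneous_X _ i))
    exact sub_eq_zero.mp this
  have hTV : T.comp V = AlgHom.id ℂ _ := by
    apply MvPolynomial.algHom_ext
    intro j
    simp only [AlgHom.coe_comp, Function.comp_apply, AlgHom.id_apply]
    have hw : (T (V (X j))).IsHomogeneous 1 := by
      have : V (X j) = qI j := aeval_X qI j
      rw [this]
      exact (hqI1 j).aeval qX (fun i => hqX1 i)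
    have hmkeq : Ideal.Quotient.mk (jacobianIdeal f) (T (V (X j))) = Ideal.Quotient.mk (jacobianIdeal f) (X j) := by
      rw [← hT (V (X j))]
      have : V (X j) = qI j := aeval_X qI j
      rw [this]
      exact hqI2 j
    have hmem : T (V (X j)) - X j ∈ (jacobianIdeal f) := Ideal.Quotient.eq.mp hmkeq
    have := homog_one_jac hd hf hmem (hw.sub (isHomogeneous_X _ j))
    exact sub_eq_zero.mp this
  set U : MvPolynomial (Fin n) ℂ ≃ₐ[ℂ] MvPolynomial (Fin n) ℂ := AlgEquiv.ofAlgHom T V hTV hVT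
  have hUapp : ∀ p, U p = T p := fun p => rfl
  refine ⟨U, ?_, ?_, ?_⟩
  · intro i
    rw [hUapp, show T (X i) = qX i from aeval_X qX i]
    exact hqX1 i
  · apply le_antisymm
    · rw [Ideal.map_le_iff_le_comap]
      intro p hp
      simp only [Ideal.mem_comap]
      have h0 : Ideal.Quotient.mk (jacobianIdeal g) p = 0 := Ideal.Quotient.eq_zero_iff_mem.mpr hp
      have : Ideal.Quotient.mk (jacobianIdeal f) (T p) = 0 := by rw [← hT, h0, map_zero]
      exact Ideal.Quotient.eq_zero_iff_mem.mp this
    · intro r hr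
      have hsymm : U.symm r ∈ (jacobianIdeal g) := by
        have h1 : Ideal.Quotient.mk (jacobianIdeal f) (U (U.symm r)) = 0 := by
          rw [U.apply_symm_apply]
          exact Ideal.Quotient.eq_zero_iff_mem.mpr hr
        have h2 : φ (Ideal.Quotient.mk (jacobianIdeal g) (U.symm r)) = 0 := by
          rw [hT (U.symm r)]
          exact h1
        have h3 : Ideal.Quotient.mk (jacobianIdeal g) (U.symm r) = 0 :=
          φ.injective (h2.trans (map_zero φ).symm)
        exact Ideal.Quotient.eq_zero_iff_mem.mp h3
      have : r = (U : MvPolynomial (Fin n) ℂ →ₐ[ℂ] MvPolynomial (Fin n) ℂ) (U.symm r) := by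
        simp
      rw [this]
      exact Ideal.mem_map_of_mem _ hsymm
  · intro p
    rw [hUapp]
    exact hT p
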